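/- Let X be a finite Δ-metric space, Λ ≤ Γ finite groups, and π : Λ → Iso(X) an injective group homomorphism (an action of Λ on X by isometries). Then there is a finite Δ-metric space Y containing X isometrically and an injective group homomorphism π' : Γ → Iso(Y) such that for all γ ∈ Λ and x ∈ X, π'(γ)(x) = π(γ)(x). -/

import Mathlib

structure DistanceValueSet (Δ : Set ℝ) : Prop where
  nonempty : Δ.Nonempty
  pos : ∀ d ∈ Δ, 0 < d
  closed_bdd : BddAbove Δ → ∀ x ∈ Δ, ∀ y ∈ Δ, min (x + y) (sSup Δ) ∈ Δ
  closed_unbdd : ¬BddAbove Δ → ∀ x ∈ Δ, ∀ y ∈ Δ, x + y ∈ Δ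

def IsDeltaMetric (Δ : Set ℝ) (X : Type*) [MetricSpace X] : Prop :=
  ∀ x y : X, x ≠ y → dist x y ∈ Δ

section Aux

variable {X : Type} [MetricSpace X] {Γ : Type} [Group Γ]
variable (Λ : Subgroup Γ) (π : Λ →* (X ≃ᵢ X)) (D : ℝ)

open scoped Classical in
/-- pseudo-distance on `X × Γ`. -/
noncomputable def myPdist (p q : X × Γ) : ℝ :=
  if h : q.2⁻¹ * p.2 ∈ Λ then dist (π ⟨q.2⁻¹ * p.2, h⟩ p.1) q.1 else D

lemma myPdist_self (p : X × Γ) : myPdist Λ π D p p = 0 := by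
  have h : p.2⁻¹ * p.2 ∈ Λ := by simp [Λ.one_mem]
  rw [myPdist, dif_pos h]
  have h1 : (⟨p.2⁻¹ * p.2, h⟩ : Λ) = 1 := by ext; simp
  rw [h1, map_one]
  simp

lemma myPdist_comm (p q : X × Γ) : myPdist Λ π D p q = myPdist Λ π D q p := by
  by_cases h : q.2⁻¹ * p.2 ∈ Λ
  · have h' : p.2⁻¹ * q.2 ∈ Λ := by
      have := Λ.inv_mem h; simpa [mul_inv_rev] using this
    rw [myPdist, myPdist, dif_pos h, dif_pos h']
    have key : (⟨p.2⁻¹ * q.2, h'⟩ : Λ) = (⟨q.2⁻¹ * p.2, h⟩ : Λ)⁻¹ := by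
      ext; simp [mul_inv_rev]
    rw [key, map_inv]
    calc dist (π ⟨q.2⁻¹ * p.2, h⟩ p.1) q.1
        = dist ((π ⟨q.2⁻¹ * p.2, h⟩)⁻¹ (π ⟨q.2⁻¹ * p.2, h⟩ p.1))
            ((π ⟨q.2⁻¹ * p.2, h⟩)⁻¹ q.1) := by
          rw [IsometryEquiv.dist_eq]
      _ = dist ((π ⟨q.2⁻¹ * p.2, h⟩)⁻¹ q.1) p.1 := by
          rw [dist_comm]
          congr 1
          exact (π ⟨q.2⁻¹ * p.2, h⟩).symm_apply_apply p.1
  · have h' : ¬ p.2⁻¹ * q.2 ∈ Λ := by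
      intro hc; exact h (by simpa [mul_inv_rev] using Λ.inv_mem hc)
    rw [myPdist, myPdist, dif_neg h, dif_neg h']

lemma myPdist_triangle (hD0 : 0 ≤ D) (hD2 : ∀ x y : X, dist x y ≤ 2 * D)
    (p q r : X × Γ) : myPdist Λ π D p r ≤ myPdist Λ π D p q + myPdist Λ π D q r := by
  by_cases ha : q.2⁻¹ * p.2 ∈ Λ <;> by_cases hb : r.2⁻¹ * q.2 ∈ Λ
  · have hc : r.2⁻¹ * p.2 ∈ Λ := by
      have := Λ.mul_mem hb ha; simpa [mul_assoc] using this
    rw [myPdist, myPdist, myPdist, dif_pos ha, dif_pos hb, dif_pos hc]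
    have key : (⟨r.2⁻¹ * p.2, hc⟩ : Λ) = ⟨r.2⁻¹ * q.2, hb⟩ * ⟨q.2⁻¹ * p.2, ha⟩ := by
      ext; simp [mul_assoc]
    rw [key, map_mul]
    calc dist ((π ⟨r.2⁻¹ * q.2, hb⟩ * π ⟨q.2⁻¹ * p.2, ha⟩) p.1) r.1
        ≤ dist ((π ⟨r.2⁻¹ * q.2, hb⟩ * π ⟨q.2⁻¹ * p.2, ha⟩) p.1)
            (π ⟨r.2⁻¹ * q.2, hb⟩ q.1) + dist (π ⟨r.2⁻¹ * q.2, hb⟩ q.1) r.1 :=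
          dist_triangle _ _ _
      _ = dist (π ⟨q.2⁻¹ * p.2, ha⟩ p.1) q.1 + dist (π ⟨r.2⁻¹ * q.2, hb⟩ q.1) r.1 := by
          congr 1
          exact (π ⟨r.2⁻¹ * q.2, hb⟩).dist_eq _ _
  · have hc : ¬ r.2⁻¹ * p.2 ∈ Λ := by
      intro hcc
      exact hb (by simpa [mul_assoc] using Λ.mul_mem hcc (Λ.inv_mem ha))
    rw [myPdist, myPdist, myPdist, dif_neg hc, dif_pos ha, dif_neg hb]
    have := dist_nonneg (x := π ⟨q.2⁻¹ * p.2, ha⟩ p.1) (y := q.1)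
    linarith
  · have hc : ¬ r.2⁻¹ * p.2 ∈ Λ := by
      intro hcc
      exact ha (by simpa [mul_assoc] using Λ.mul_mem (Λ.inv_mem hb) hcc)
    rw [myPdist, myPdist, myPdist, dif_neg hc, dif_neg ha, dif_pos hb]
    have := dist_nonneg (x := π ⟨r.2⁻¹ * q.2, hb⟩ q.1) (y := r.1)
    linarith
  · rw [myPdist, myPdist, myPdist, dif_neg ha, dif_neg hb]
    by_cases hc : r.2⁻¹ * p.2 ∈ Λ
    · rw [dif_pos hc]
      have := hD2 (π ⟨r.2⁻¹ * p.2, hc⟩ p.1) r.1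
      linarith
    · rw [dif_neg hc]; linarith

lemma myPdist_nonneg (hD0 : 0 ≤ D) (hD2 : ∀ x y : X, dist x y ≤ 2 * D) (p q : X × Γ) :
    0 ≤ myPdist Λ π D p q := by
  have h := myPdist_triangle Λ π D hD0 hD2 p q p
  rw [myPdist_self, myPdist_comm Λ π D q p] at h
  linarith

lemma myPdist_act (h : Γ) (p q : X × Γ) :
    myPdist Λ π D (p.1, h * p.2) (q.1, h * q.2) = myPdist Λ π D p q := by
  have e : (h * q.2)⁻¹ * (h * p.2) = q.2⁻¹ * p.2 := by group
  by_cases hm : q.2⁻¹ * p.2 ∈ Λ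
  · have hm' : (h * q.2)⁻¹ * (h * p.2) ∈ Λ := e ▸ hm
    simp only [myPdist]
    rw [dif_pos hm', dif_pos hm]
    have h2 : (⟨(h * q.2)⁻¹ * (h * p.2), hm'⟩ : Λ) = ⟨q.2⁻¹ * p.2, hm⟩ := Subtype.ext e
    rw [h2]
  · have hm' : ¬ (h * q.2)⁻¹ * (h * p.2) ∈ Λ := fun hc => hm (e ▸ hc)
    simp only [myPdist]
    rw [dif_neg hm', dif_neg hm]

lemma myPdist_of_mem {p q : X × Γ} (h : q.2⁻¹ * p.2 ∈ Λ) :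
    myPdist Λ π D p q = dist (π ⟨q.2⁻¹ * p.2, h⟩ p.1) q.1 := dif_pos h

lemma myPdist_of_not_mem {p q : X × Γ} (h : ¬ q.2⁻¹ * p.2 ∈ Λ) :
    myPdist Λ π D p q = D := dif_neg h

end Aux

/-- Extension of a faithful isometric action of a finite subgroup Λ ≤ Γ on a finite
Δ-metric space X to a faithful isometric action of Γ on a finite Δ-metric space Y ⊇ X. -/
theorem stmt_2 (Δ : Set ℝ) (hΔ : DistanceValueSet Δ)
    (X : Type) [MetricSpace X] [Finite X] (hX : IsDeltaMetric Δ X)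
    (Γ : Type) [Group Γ] [Finite Γ] (Λ : Subgroup Γ)
    (π : Λ →* (X ≃ᵢ X)) (hπ : Function.Injective π) :
    ∃ (Y : Type) (_ : MetricSpace Y) (j : X → Y) (π' : Γ →* (Y ≃ᵢ Y)),
      Finite Y ∧ IsDeltaMetric Δ Y ∧ Isometry j ∧ Function.Injective π' ∧
      ∀ (γ : Λ) (x : X), π' (γ : Γ) (j x) = j (π γ x) := by
  classical
  obtain ⟨D0, hD0Δ⟩ := hΔ.nonempty
  have hD0pos : 0 < D0 := hΔ.pos D0 hD0Δ
  rcases isEmpty_or_nonempty X with hE | hNE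
  · -- X is empty : take Y = Γ with the discrete Δ-metric, Γ acting by left translation.
    letI M : MetricSpace Γ :=
      { dist := fun g h => if g = h then 0 else D0
        dist_self := fun g => by simp
        dist_comm := fun g h => by
          by_cases hgh : g = h
          · simp [hgh]
          · simp [hgh, Ne.symm hgh]
        dist_triangle := fun g h k => by
          show (if g = k then (0:ℝ) else D0) ≤ (if g = h then 0 else D0) + (if h = k then 0 else D0)
          rcases eq_or_ne g k with rfl | h1
          · have h2 : (0:ℝ) ≤ if g = h then 0 else D0 := by positivity
            have h3 : (0:ℝ) ≤ if h = g then 0 else D0 := by positivity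
            rw [if_pos rfl]
            linarith
          · rw [if_neg h1]
            by_cases h2 : g = h
            · rw [if_pos h2, if_neg (fun h3 => h1 (h2.trans h3))]
              linarith
            · rw [if_neg h2]
              have h3 : (0:ℝ) ≤ if h = k then 0 else D0 := by positivity
              linarith
        eq_of_dist_eq_zero := fun {g h} hd => by
          by_contra hne
          have hd' : (if g = h then (0:ℝ) else D0) = 0 := hd
          rw [if_neg hne] at hd'
          exact hD0pos.ne' hd' }
    have hdist : ∀ g h : Γ, dist g h = if g = h then 0 else D0 := fun _ _ => rfl
    let F : Γ → (Γ ≃ᵢ Γ) := fun h =>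
      { toEquiv := Equiv.mulLeft h
        isometry_toFun := Isometry.of_dist_eq fun a b => by
          simp [hdist, mul_right_inj] }
    have hm : ∀ a b : Γ, F (a * b) = F a * F b := by
      intro a b
      refine IsometryEquiv.ext fun g => ?_
      simp [F, IsometryEquiv.mul_apply, mul_assoc]
    refine ⟨Γ, M, fun x => isEmptyElim x, MonoidHom.mk' F hm, inferInstance, ?_, ?_, ?_, ?_⟩
    · intro g h hgh
      have : dist g h = D0 := by rw [hdist, if_neg hgh]
      rw [this]; exact hD0Δ
    · exact fun x => isEmptyElim x
    · refine (injective_iff_map_eq_one _).2 fun a ha => ?_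
      have := congrArg (fun (e : Γ ≃ᵢ Γ) => e 1) ha
      simpa [F] using this
    · exact fun γ x => isEmptyElim x
  · -- X nonempty
    obtain ⟨D, hDΔ, hDpos, hD2⟩ : ∃ D, D ∈ Δ ∧ 0 < D ∧ ∀ x y : X, dist x y ≤ 2 * D := by
      by_cases hs : ∃ x y : X, x ≠ y
      · obtain ⟨x0, y0, hxy⟩ := hs
        obtain ⟨⟨a, b⟩, hmax⟩ := Finite.exists_max (fun p : X × X => dist p.1 p.2)
        have hab : 0 < dist a b :=
          lt_of_lt_of_le (dist_pos.mpr hxy) (hmax (x0, y0))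
        refine ⟨dist a b, hX a b (dist_pos.mp hab), hab, fun x y => ?_⟩
        have := hmax (x, y)
        simp only at this
        linarith
      · push_neg at hs
        refine ⟨D0, hD0Δ, hD0pos, fun x y => ?_⟩
        rw [hs x y, dist_self]
        positivity
    have hD0 : 0 ≤ D := hDpos.le
    have pd_tri := myPdist_triangle Λ π D hD0 hD2
    have pd_nn := myPdist_nonneg Λ π D hD0 hD2
    let S : Setoid (X × Γ) :=
      { r := fun p q => myPdist Λ π D p q = 0
        iseqv := ⟨myPdist_self Λ π D,
          fun {p q} h => by rw [myPdist_comm]; exact h,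
          fun {p q r} h1 h2 => le_antisymm
            (by have := pd_tri p q r; rw [h1, h2] at this; linarith)
            (pd_nn p r)⟩ }
    have wd2 : ∀ a₁ b₁ a₂ b₂ : X × Γ, S.r a₁ a₂ → S.r b₁ b₂ →
        myPdist Λ π D a₁ b₁ = myPdist Λ π D a₂ b₂ := by
      intro a₁ b₁ a₂ b₂ h1 h2
      replace h1 : myPdist Λ π D a₁ a₂ = 0 := h1
      replace h2 : myPdist Λ π D b₁ b₂ = 0 := h2
      have hb : myPdist Λ π D b₂ b₁ = 0 := by
        rw [myPdist_comm]; exact h2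
      have ha : myPdist Λ π D a₂ a₁ = 0 := by
        rw [myPdist_comm]; exact h1
      have t1 : myPdist Λ π D a₁ b₁ ≤ myPdist Λ π D a₁ a₂ +
          (myPdist Λ π D a₂ b₂ + myPdist Λ π D b₂ b₁) := by
        have := pd_tri a₁ a₂ b₁
        have := pd_tri a₂ b₂ b₁
        linarith
      have t2 : myPdist Λ π D a₂ b₂ ≤ myPdist Λ π D a₂ a₁ +
          (myPdist Λ π D a₁ b₁ + myPdist Λ π D b₁ b₂) := by
        have := pd_tri a₂ a₁ b₂
        have := pd_tri a₁ b₁ b₂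
        linarith
      rw [h1, hb] at t1
      rw [ha, h2] at t2
      linarith
    letI M : MetricSpace (Quotient S) :=
      { dist := Quotient.lift₂ (myPdist Λ π D) wd2
        dist_self := by rintro ⟨p⟩; exact myPdist_self Λ π D p
        dist_comm := by rintro ⟨p⟩ ⟨q⟩; exact myPdist_comm Λ π D p q
        dist_triangle := by rintro ⟨p⟩ ⟨q⟩ ⟨r⟩; exact pd_tri p q r
        eq_of_dist_eq_zero := by rintro ⟨p⟩ ⟨q⟩ h; exact Quotient.sound h }

    have hwd : ∀ (h : Γ) (p q : X × Γ), S.r p q → S.r (p.1, h * p.2) (q.1, h * q.2) := by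
      intro h p q hpq
      show myPdist Λ π D (p.1, h * p.2) (q.1, h * q.2) = 0
      rw [myPdist_act]
      exact hpq
    let F : Γ → (Quotient S ≃ᵢ Quotient S) := fun h =>
      { toFun := Quotient.map (fun p => (p.1, h * p.2)) (hwd h)
        invFun := Quotient.map (fun p => (p.1, h⁻¹ * p.2)) (hwd h⁻¹)
        left_inv := by
          rintro ⟨p⟩
          refine congrArg (Quotient.mk S) ?_
          simp
        right_inv := by
          rintro ⟨p⟩
          refine congrArg (Quotient.mk S) ?_
          simp
        isometry_toFun := Isometry.of_dist_eq (by
          rintro ⟨p⟩ ⟨q⟩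
          exact myPdist_act Λ π D h p q) }
    have hm : ∀ a b : Γ, F (a * b) = F a * F b := by
      intro a b
      refine IsometryEquiv.ext ?_
      rintro ⟨p⟩
      show Quotient.mk S (p.1, (a * b) * p.2) = Quotient.mk S (p.1, a * (b * p.2))
      rw [mul_assoc]
    refine ⟨Quotient S, M, fun x => Quotient.mk S (x, 1), MonoidHom.mk' F hm,
      Quotient.finite S, ?_, ?_, ?_, ?_⟩
    · -- IsDeltaMetric
      rintro ⟨p⟩ ⟨q⟩ hne
      have hne0 : myPdist Λ π D p q ≠ 0 := fun h0 => hne (Quotient.sound h0)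
      show myPdist Λ π D p q ∈ Δ
      by_cases h : q.2⁻¹ * p.2 ∈ Λ
      · rw [myPdist_of_mem Λ π D h] at hne0 ⊢
        exact hX _ _ (fun heq => hne0 (by rw [heq, dist_self]))
      · rw [myPdist_of_not_mem Λ π D h]
        exact hDΔ
    · -- Isometry j
      refine Isometry.of_dist_eq fun x y => ?_
      show myPdist Λ π D (x, 1) (y, 1) = dist x y
      have h1 : (((y, (1:Γ)) : X × Γ)).2⁻¹ * (((x, (1:Γ)) : X × Γ)).2 ∈ Λ := by
        simp [Λ.one_mem]
      rw [myPdist_of_mem Λ π D h1]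
      have h2 : (⟨(((y, (1:Γ)) : X × Γ)).2⁻¹ * (((x, (1:Γ)) : X × Γ)).2, h1⟩ : Λ) = 1 := by
        ext; simp
      rw [h2, map_one]
      rfl
    · -- injectivity of π'
      refine (injective_iff_map_eq_one _).2 fun h hh => ?_
      have hFh : F h = 1 := hh
      obtain ⟨x0⟩ := hNE
      have key : ∀ x : X, myPdist Λ π D ((x : X), h) (x, 1) = 0 := by
        intro x
        have := congrArg (fun (e : Quotient S ≃ᵢ Quotient S) => e (Quotient.mk S (x, 1))) hFh
        have h2 : Quotient.mk S ((x : X), h * 1) = Quotient.mk S (x, 1) := this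
        rw [mul_one] at h2
        exact Quotient.exact h2
      have hhΛ : h ∈ Λ := by
        by_contra hnot
        have hk := key x0
        have hnot' : ¬ (((x0, (1:Γ)) : X × Γ)).2⁻¹ * (((x0, h) : X × Γ)).2 ∈ Λ := by
          simpa using hnot
        rw [myPdist_of_not_mem Λ π D hnot'] at hk
        exact hDpos.ne' hk
      have hfix : ∀ x : X, π ⟨h, hhΛ⟩ x = x := by
        intro x
        have hk := key x
        have hmem : (((x, (1:Γ)) : X × Γ)).2⁻¹ * (((x, h) : X × Γ)).2 ∈ Λ := by
          simpa using hhΛ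
        rw [myPdist_of_mem Λ π D hmem] at hk
        have heq : (⟨(((x, (1:Γ)) : X × Γ)).2⁻¹ * (((x, h) : X × Γ)).2, hmem⟩ : Λ)
            = ⟨h, hhΛ⟩ := by ext; simp
        rw [heq] at hk
        exact dist_eq_zero.mp hk
      have : (⟨h, hhΛ⟩ : Λ) = 1 := hπ (by
        refine IsometryEquiv.ext fun x => ?_
        rw [map_one]
        exact hfix x)
      simpa using congrArg (Subtype.val) this
    · -- extension of the action
      intro γ x
      show Quotient.mk S (x, (γ : Γ) * 1) = Quotient.mk S (π γ x, 1)
      refine Quotient.sound ?_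
      show myPdist Λ π D (x, (γ : Γ) * 1) (π γ x, 1) = 0
      have hmem : (((π γ x, (1:Γ)) : X × Γ)).2⁻¹ * (((x, (γ:Γ) * 1) : X × Γ)).2 ∈ Λ := by
        simp [γ.2]
      rw [myPdist_of_mem Λ π D hmem]
      have heq : (⟨(((π γ x, (1:Γ)) : X × Γ)).2⁻¹ * (((x, (γ:Γ) * 1) : X × Γ)).2, hmem⟩ : Λ)
          = γ := by ext; simp
      rw [heq]
      exact dist_eq_zero.mpr rfl
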